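/- (Boosting by plurality via minimax) Let S be a finite set of n labeled examples and let T range over a finite set of 'training multisets'. Suppose there is a distribution P over training multisets such that for every example (x,y) ∈ S, the probability over T ∼ P that h_T(x) ≠ y is at most 1/4, where h_T is a fixed hypothesis determined by T. Let ℓ ≥ 8·ln(n) + 1. Then there exist T_1,…,T_ℓ such that for every (x,y) ∈ S, strictly fewer than ℓ/2 of the hypotheses h_{T_1},…,h_{T_ℓ} err on (x,y); in particular the plurality vote of h_{T_1},…,h_{T_ℓ} correctly classifies every example in S. -/

import Mathlib

open Finset
open scoped Classical

/-- Chernoff-style counting bound: the total `P`-product-weight of tuples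
`v : Fin ℓ → T` for which at least `ℓ/2` coordinates land in a set `E` of
probability at most `1/4` is at most `2^ℓ · 3^{ℓ/2} · (1/4)^ℓ`. -/
lemma bad_sum_le {T : Type*} [Fintype T] (P : T → ℝ) (hP0 : ∀ t, 0 ≤ P t)
    (hP1 : ∑ t : T, P t = 1) (E : Finset T) (hE : ∑ t ∈ E, P t ≤ 1/4) (ℓ : ℕ) :
    ∑ v ∈ (Finset.univ : Finset (Fin ℓ → T)).filter
        (fun v => ℓ ≤ 2 * (Finset.univ.filter (fun j => v j ∈ E)).card),
      ∏ j, P (v j) ≤ 2^ℓ * ((3:ℝ)^((ℓ:ℝ)/2) * (1/4:ℝ)^ℓ) := by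
  set q : ℝ := ∑ t ∈ E, P t with hqdef
  have hq0 : 0 ≤ q := Finset.sum_nonneg fun t _ => hP0 t
  have hqc : ∑ t ∈ Eᶜ, P t = 1 - q := by
    have := Finset.sum_add_sum_compl E P
    rw [hP1] at this; linarith
  have h1q0 : 0 ≤ 1 - q := by
    rw [← hqc]; exact Finset.sum_nonneg fun t _ => hP0 t
  set g : (Fin ℓ → T) → Finset (Fin ℓ) :=
    fun v => Finset.univ.filter (fun j => v j ∈ E) with hgdef
  set 𝒜 : Finset (Finset (Fin ℓ)) :=
    (Finset.univ : Finset (Finset (Fin ℓ))).filter (fun A => ℓ ≤ 2 * A.card) with hA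
  set Bad : Finset (Fin ℓ → T) :=
    (Finset.univ : Finset (Fin ℓ → T)).filter (fun v => ℓ ≤ 2 * (g v).card) with hBad
  have hu0 : (0:ℝ) ≤ (3:ℝ)^((ℓ:ℝ)/2) * (1/4:ℝ)^ℓ := by positivity
  have hmaps : ∀ v ∈ Bad, g v ∈ 𝒜 := by
    intro v hv
    rw [hBad, Finset.mem_filter] at hv
    rw [hA, Finset.mem_filter]
    exact ⟨Finset.mem_univ _, hv.2⟩
  have hstep1 : ∑ v ∈ Bad, ∏ j, P (v j)
      = ∑ A ∈ 𝒜, ∑ v ∈ Bad.filter (fun v => g v = A), ∏ j, P (v j) :=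
    (Finset.sum_fiberwise_of_maps_to hmaps _).symm
  -- the fiber over A is a product set
  have hfiber : ∀ A ∈ 𝒜, Bad.filter (fun v => g v = A)
      = Fintype.piFinset (fun j => if j ∈ A then E else Eᶜ) := by
    intro A hA'
    rw [hA, Finset.mem_filter] at hA'
    ext v
    simp only [hBad, Finset.mem_filter, Finset.mem_univ, true_and,
      Fintype.mem_piFinset, Finset.filter_filter]
    constructor
    · rintro ⟨_, rfl⟩ j
      by_cases hj : v j ∈ E
      · have : j ∈ g v := by simp [hgdef, hj]
        simp [this, hj]
      · have : j ∉ g v := by simp [hgdef, hj]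
        simp [this, hj]
    · intro hv
      have hgA : g v = A := by
        ext j
        specialize hv j
        by_cases hj : j ∈ A
        · simp only [hj, if_true] at hv
          simp [hgdef, hv, hj]
        · simp only [hj, if_false, Finset.mem_compl] at hv
          simp [hgdef, hv, hj]
      exact ⟨by rw [hgA]; exact hA'.2, hgA⟩
  -- the weight of each fiber
  have hfibval : ∀ A : Finset (Fin ℓ),
      ∑ v ∈ Fintype.piFinset (fun j => if j ∈ A then E else Eᶜ), ∏ j, P (v j)
      = q ^ A.card * (1 - q) ^ (ℓ - A.card) := by
    intro A
    rw [← Finset.prod_univ_sum (fun j => if j ∈ A then E else Eᶜ) (fun _ t => P t)]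
    have : ∀ j : Fin ℓ, (∑ t ∈ (if j ∈ A then E else Eᶜ), P t)
        = if j ∈ A then q else 1 - q := by
      intro j
      by_cases hj : j ∈ A <;> simp [hj, hqc, hqdef]
    rw [Finset.prod_congr rfl (fun j _ => this j), Finset.prod_ite,
      Finset.prod_const, Finset.prod_const]
    congr 1
    · congr 1
      rw [Finset.filter_univ_mem]
    · congr 1
      have : Finset.univ.filter (fun j : Fin ℓ => ¬ j ∈ A) = Aᶜ := by
        ext j; simp
      rw [this, Finset.card_compl, Fintype.card_fin]
  -- bounding each fiber weight
  have hfrag : ∀ a b : ℕ, (1/4:ℝ)^a * (3/16:ℝ)^b = 3^b * (1/4:ℝ)^(a+2*b) := by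
    intro a b
    rw [show (3/16:ℝ) = 3*(1/4)^2 by norm_num, mul_pow, ← pow_mul, pow_add]
    ring
  have hbound : ∀ A ∈ 𝒜, q ^ A.card * (1 - q) ^ (ℓ - A.card)
      ≤ (3:ℝ)^((ℓ:ℝ)/2) * (1/4:ℝ)^ℓ := by
    intro A hA'
    rw [hA, Finset.mem_filter] at hA'
    have hk : A.card ≤ ℓ := by
      simpa [Fintype.card_fin] using Finset.card_le_univ A
    have h2k : ℓ ≤ 2 * A.card := hA'.2
    set k := A.card
    have e1 : q ^ k = q ^ (2*k - ℓ) * q ^ (ℓ - k) := by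
      rw [← pow_add]; congr 1; omega
    have step : q ^ k * (1 - q) ^ (ℓ - k)
        = q ^ (2*k - ℓ) * (q * (1 - q)) ^ (ℓ - k) := by
      rw [e1, mul_assoc, ← mul_pow]
    have hq14 : q ≤ 1/4 := hE
    have hq316 : q * (1 - q) ≤ 3/16 := by nlinarith
    have step2 : q ^ (2*k - ℓ) * (q * (1 - q)) ^ (ℓ - k)
        ≤ (1/4:ℝ) ^ (2*k - ℓ) * (3/16:ℝ) ^ (ℓ - k) := by
      apply mul_le_mul
      · exact pow_le_pow_left₀ hq0 hq14 _
      · exact pow_le_pow_left₀ (mul_nonneg hq0 h1q0) hq316 _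
      · positivity
      · positivity
    have hx : (2*k - ℓ) + 2*(ℓ - k) = ℓ := by omega
    have step3 : (1/4:ℝ) ^ (2*k - ℓ) * (3/16:ℝ) ^ (ℓ - k)
        = (3:ℝ)^(ℓ - k) * (1/4:ℝ)^ℓ := by
      rw [hfrag, hx]
    have step4 : (3:ℝ)^(ℓ - k) ≤ (3:ℝ)^((ℓ:ℝ)/2) := by
      rw [← Real.rpow_natCast 3 (ℓ - k)]
      apply Real.rpow_le_rpow_of_exponent_le (by norm_num)
      have : 2 * (ℓ - k) ≤ ℓ := by omega
      have := (Nat.cast_le (α := ℝ)).mpr this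
      push_cast at this ⊢
      linarith
    calc q ^ k * (1 - q) ^ (ℓ - k)
        ≤ (1/4:ℝ) ^ (2*k - ℓ) * (3/16:ℝ) ^ (ℓ - k) := by rw [step]; exact step2
      _ = (3:ℝ)^(ℓ - k) * (1/4:ℝ)^ℓ := step3
      _ ≤ (3:ℝ)^((ℓ:ℝ)/2) * (1/4:ℝ)^ℓ := by
          apply mul_le_mul_of_nonneg_right step4 (by positivity)
  -- combine
  have hcard : (𝒜.card : ℝ) ≤ 2^ℓ := by
    have h1 : 𝒜.card ≤ (Finset.univ : Finset (Finset (Fin ℓ))).card :=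
      Finset.card_filter_le _ _
    have h2 : (Finset.univ : Finset (Finset (Fin ℓ))).card = 2^ℓ := by
      rw [Finset.card_univ, Fintype.card_finset, Fintype.card_fin]
    have : 𝒜.card ≤ 2^ℓ := h2 ▸ h1
    exact_mod_cast this
  calc ∑ v ∈ Bad, ∏ j, P (v j)
      = ∑ A ∈ 𝒜, ∑ v ∈ Bad.filter (fun v => g v = A), ∏ j, P (v j) := hstep1
    _ ≤ ∑ A ∈ 𝒜, ((3:ℝ)^((ℓ:ℝ)/2) * (1/4:ℝ)^ℓ) := by
        apply Finset.sum_le_sum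
        intro A hA'
        rw [hfiber A hA', hfibval A]
        exact hbound A hA'
    _ = (𝒜.card : ℝ) * ((3:ℝ)^((ℓ:ℝ)/2) * (1/4:ℝ)^ℓ) := by
        rw [Finset.sum_const, nsmul_eq_mul]
    _ ≤ 2^ℓ * ((3:ℝ)^((ℓ:ℝ)/2) * (1/4:ℝ)^ℓ) :=
        mul_le_mul_of_nonneg_right hcard hu0

/-- Numeric estimate: if `ℓ ≥ 8 log n + 1` and `n ≥ 1` then
`n · 2^ℓ · 3^{ℓ/2} · (1/4)^ℓ < 1`. -/
lemma numeric_bound (n ℓ : ℕ) (hn : 1 ≤ n) (hℓ : 8 * Real.log (n:ℝ) + 1 ≤ (ℓ:ℝ)) :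
    (n:ℝ) * (2^ℓ * ((3:ℝ)^((ℓ:ℝ)/2) * (1/4:ℝ)^ℓ)) < 1 := by
  have hn0 : (0:ℝ) < (n:ℝ) := by exact_mod_cast hn
  have hlogn : 0 ≤ Real.log (n:ℝ) := Real.log_natCast_nonneg n
  -- the key constant
  have hc : 1 < 8 * Real.log 2 - 4 * Real.log 3 := by
    have h1 : Real.exp 1 < 256/81 := lt_trans Real.exp_one_lt_d9 (by norm_num)
    have h2 : Real.log (Real.exp 1) < Real.log (256/81) :=
      Real.log_lt_log (Real.exp_pos 1) h1
    rw [Real.log_exp] at h2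
    have h3 : Real.log ((256:ℝ)/81) = 8 * Real.log 2 - 4 * Real.log 3 := by
      rw [Real.log_div (by norm_num) (by norm_num),
        show (256:ℝ) = 2^8 by norm_num, show (81:ℝ) = 3^4 by norm_num,
        Real.log_pow, Real.log_pow]
      push_cast; ring
    linarith [h3 ▸ h2]
  have hlog2 : 0 < Real.log 2 := Real.log_pos (by norm_num)
  have hlog3 : 0 < Real.log 3 := Real.log_pos (by norm_num)
  -- rewrite everything as exponentials
  have e1 : (n:ℝ) = Real.exp (Real.log (n:ℝ)) := (Real.exp_log hn0).symm
  have e2 : (2:ℝ)^ℓ = Real.exp ((ℓ:ℝ) * Real.log 2) := by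
    rw [Real.exp_nat_mul, Real.exp_log (by norm_num)]
  have e3 : (3:ℝ)^((ℓ:ℝ)/2) = Real.exp (Real.log 3 * ((ℓ:ℝ)/2)) := by
    rw [Real.rpow_def_of_pos (by norm_num)]
  have e4 : (1/4:ℝ)^ℓ = Real.exp ((ℓ:ℝ) * Real.log (1/4)) := by
    rw [Real.exp_nat_mul, Real.exp_log (by norm_num)]
  have e5 : Real.log ((1:ℝ)/4) = -(2 * Real.log 2) := by
    rw [one_div, Real.log_inv, show (4:ℝ) = 2^2 by norm_num, Real.log_pow]
    push_cast; ring
  rw [e5] at e4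
  rw [e1, e2, e3, e4, ← Real.exp_add, ← Real.exp_add, ← Real.exp_add]
  calc Real.exp _ < Real.exp 0 := by
        rw [Real.exp_lt_exp]
        nlinarith [mul_nonneg (by linarith : (0:ℝ) ≤ 8 * Real.log 2 - 4 * Real.log 3 - 1) hlogn]
    _ = 1 := Real.exp_zero
  -- (unused)
  -- nlinarith [mul_nonneg (by linarith : (0:ℝ) ≤ 8 * Real.log 2 - 4 * Real.log 3 - 1) hlogn]

/-- Boosting by plurality via minimax: Let `S` be a finite set of `n`
labeled examples, `T` a finite type of training multisets, `h t` the hypothesis determined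
by `t : T`, and `P` a distribution over `T` such that for each example `(x,y) ∈ S` the
probability over `t ∼ P` that `h t` errs on `(x,y)` is at most `1/4`. If
`ℓ ≥ 8·ln(n) + 1`, then there exist `t_1, …, t_ℓ` such that on every example of `S`,
strictly fewer than `ℓ/2` of the hypotheses `h t_1, …, h t_ℓ` err; in particular the
plurality vote classifies every example of `S` correctly. -/
theorem boosting_plurality {X Y T : Type*} [Fintype T]
    (S : Finset (X × Y)) (n : ℕ) (hn : S.card = n)
    (h : T → X → Y) (P : T → ℝ) (hP0 : ∀ t, 0 ≤ P t) (hP1 : ∑ t : T, P t = 1)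
    (hweak : ∀ e ∈ S, ∑ t ∈ Finset.univ.filter (fun t : T => h t e.1 ≠ e.2), P t ≤ 1 / 4)
    (ℓ : ℕ) (hℓ : 8 * Real.log (n : ℝ) + 1 ≤ (ℓ : ℝ)) :
    ∃ ts : Fin ℓ → T, ∀ e ∈ S,
      2 * (Finset.univ.filter (fun j : Fin ℓ => h (ts j) e.1 ≠ e.2)).card < ℓ := by
  have hT : Nonempty T := by
    by_contra hTe
    rw [not_nonempty_iff] at hTe
    rw [Finset.univ_eq_empty, Finset.sum_empty] at hP1
    norm_num at hP1
  rcases Nat.eq_zero_or_pos n with h0 | hpos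
  · have hS : S = ∅ := Finset.card_eq_zero.mp (by rw [hn, h0])
    exact ⟨fun _ => Classical.arbitrary T, by simp [hS]⟩
  -- the product weight
  set w : (Fin ℓ → T) → ℝ := fun v => ∏ j, P (v j) with hw
  have hw0 : ∀ v, 0 ≤ w v := fun v => Finset.prod_nonneg fun j _ => hP0 (v j)
  have hwsum : ∑ v : Fin ℓ → T, w v = 1 := by
    rw [hw]
    rw [← Fintype.piFinset_univ,
      ← Finset.prod_univ_sum (fun _ : Fin ℓ => (Finset.univ : Finset T))
        (fun _ t => P t)]
    simp [hP1]
  by_contra hcon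
  push_neg at hcon
  -- union bound
  have key : (1:ℝ) ≤ ∑ e ∈ S, ∑ v ∈ (Finset.univ : Finset (Fin ℓ → T)).filter
      (fun v => ℓ ≤ 2 * (Finset.univ.filter (fun j => h (v j) e.1 ≠ e.2)).card), w v := by
    have step1 : (1:ℝ) ≤ ∑ v : Fin ℓ → T, ∑ e ∈ S.filter
        (fun e => ℓ ≤ 2 * (Finset.univ.filter (fun j => h (v j) e.1 ≠ e.2)).card), w v := by
      rw [← hwsum]
      apply Finset.sum_le_sum
      intro v _
      obtain ⟨e, he, hbad⟩ := hcon v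
      exact Finset.single_le_sum (fun _ _ => hw0 v)
        (Finset.mem_filter.mpr ⟨he, hbad⟩)
    calc (1:ℝ) ≤ _ := step1
      _ = ∑ v : Fin ℓ → T, ∑ e ∈ S, if ℓ ≤ 2 *
            (Finset.univ.filter (fun j => h (v j) e.1 ≠ e.2)).card then w v else 0 := by
          apply Finset.sum_congr rfl
          intro v _
          rw [Finset.sum_filter]
      _ = ∑ e ∈ S, ∑ v : Fin ℓ → T, if ℓ ≤ 2 *
            (Finset.univ.filter (fun j => h (v j) e.1 ≠ e.2)).card then w v else 0 :=
          Finset.sum_comm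
      _ = _ := by
          apply Finset.sum_congr rfl
          intro e _
          rw [Finset.sum_filter]
  -- apply the per-example bound
  have hbound : ∀ e ∈ S, ∑ v ∈ (Finset.univ : Finset (Fin ℓ → T)).filter
      (fun v => ℓ ≤ 2 * (Finset.univ.filter (fun j => h (v j) e.1 ≠ e.2)).card), w v
      ≤ 2^ℓ * ((3:ℝ)^((ℓ:ℝ)/2) * (1/4:ℝ)^ℓ) := by
    intro e he
    have := bad_sum_le P hP0 hP1 (Finset.univ.filter (fun t : T => h t e.1 ≠ e.2))
      (hweak e he) ℓ
    convert this using 3 with v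
    simp
  have htot : (1:ℝ) ≤ (n:ℝ) * (2^ℓ * ((3:ℝ)^((ℓ:ℝ)/2) * (1/4:ℝ)^ℓ)) := by
    calc (1:ℝ) ≤ _ := key
      _ ≤ ∑ _e ∈ S, (2^ℓ * ((3:ℝ)^((ℓ:ℝ)/2) * (1/4:ℝ)^ℓ)) :=
          Finset.sum_le_sum hbound
      _ = (n:ℝ) * (2^ℓ * ((3:ℝ)^((ℓ:ℝ)/2) * (1/4:ℝ)^ℓ)) := by
          rw [Finset.sum_const, nsmul_eq_mul, hn]
  exact absurd htot (not_le.mpr (numeric_bound n ℓ hpos hℓ))
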